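/- Define σ_n² = (16π³/(2n+1)) ( (2π²/3)|P̃_n^0(0)|² + 2 ∑_{j=1}^{n} |P̃_n^j(0)|²/j² ). Then for even n, (16/3)π³/(n+1) ≤ σ_n² ≤ (8π⁴/3 + 4π²)/(n+1), and for odd n, 16π/(n+1) ≤ σ_n² ≤ 4π²(4/√3 + 1)/(n+1). -/

import Mathlib

open Real Finset

/-- The square `|P̃_n^j(0)|²` of the normalized associated Legendre function at zero:
zero when `n + j` is odd, and given by the double-factorial formula when `n + j` is even. -/
noncomputable def ptildeSq (n j : ℕ) : ℝ :=
  if Even (n + j) then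
    (2 * n + 1) / (4 * Real.pi) *
      ((Nat.doubleFactorial (n - j - 1) * Nat.doubleFactorial (n + j - 1) : ℝ) /
        (Nat.doubleFactorial (n - j) * Nat.doubleFactorial (n + j) : ℝ))
  else 0

/-- The squared singular values `σ_n²` of the spherical arc transform. -/
noncomputable def sigmaSq (n : ℕ) : ℝ :=
  16 * Real.pi ^ 3 / (2 * n + 1) *
    (2 * Real.pi ^ 2 / 3 * ptildeSq n 0 +
      2 * ∑ j ∈ Finset.Icc 1 n, ptildeSq n j / (j : ℝ) ^ 2)


noncomputable def wr (l : ℕ) : ℝ := ∏ i ∈ Finset.range l, (2 * (i:ℝ) + 1) / (2 * i + 2)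

lemma wr_succ (l : ℕ) : wr (l + 1) = wr l * ((2 * l + 1) / (2 * l + 2)) := by
  rw [wr, wr, Finset.prod_range_succ]

lemma wr_pos (l : ℕ) : 0 < wr l := by
  apply Finset.prod_pos
  intro i _
  positivity

lemma wr_le_one (l : ℕ) : wr l ≤ 1 := by
  apply Finset.prod_le_one
  · intro i _; positivity
  · intro i _
    rw [div_le_one (by positivity)]
    linarith

lemma df_odd (l : ℕ) : Nat.doubleFactorial (2 * l + 1) = (2 * l + 1) * Nat.doubleFactorial (2 * l - 1) := by
  cases l with
  | zero => rfl
  | succ m =>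
    have : 2 * (m + 1) + 1 = (2 * m + 1) + 2 := by ring
    rw [this, Nat.doubleFactorial_add_two]
    have h2 : 2 * (m + 1) - 1 = 2 * m + 1 := by omega
    rw [h2]

lemma df_even (l : ℕ) : Nat.doubleFactorial (2 * (l + 1)) = (2 * l + 2) * Nat.doubleFactorial (2 * l) := by
  have : 2 * (l + 1) = 2 * l + 2 := by ring
  rw [this, Nat.doubleFactorial_add_two]

lemma wr_eq (l : ℕ) : ((Nat.doubleFactorial (2 * l - 1) : ℝ)) = wr l * (Nat.doubleFactorial (2 * l)) := by
  induction l with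
  | zero => simp [wr]
  | succ m ih =>
    have h1 : 2 * (m + 1) - 1 = 2 * m + 1 := by omega
    rw [h1, df_odd, df_even, wr_succ]
    push_cast
    rw [ih]
    have h2 : (0:ℝ) < 2 * m + 2 := by positivity
    field_simp

lemma wr_sq_upper (l : ℕ) : (2 * (l:ℝ) + 1) * wr l ^ 2 ≤ 1 := by
  induction l with
  | zero => simp [wr]
  | succ m ih =>
    rw [wr_succ]
    have h1 : (0:ℝ) < 2 * m + 2 := by positivity
    have key : (2 * ((m:ℝ)+1) + 1) * (wr m * ((2*m+1)/(2*m+2)))^2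
        = ((2*(m:ℝ)+1) * wr m ^2) * ((2*m+3)*(2*m+1)/(2*m+2)^2) := by
      field_simp; ring
    push_cast
    rw [key]
    have h2 : ((2*(m:ℝ)+3)*(2*m+1)/(2*m+2)^2) ≤ 1 := by
      rw [div_le_one (by positivity)]; nlinarith
    have h3 : (0:ℝ) ≤ (2*(m:ℝ)+1) * wr m ^2 := by positivity
    calc ((2*(m:ℝ)+1) * wr m ^2) * ((2*m+3)*(2*m+1)/(2*m+2)^2)
        ≤ 1 * 1 := by
          apply mul_le_mul ih h2 (by positivity) (by norm_num)
      _ = 1 := by norm_num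

lemma wr_sq_wallis (l : ℕ) : (2 * (l:ℝ) + 1) * wr l ^ 2 * Real.Wallis.W l = 1 := by
  induction l with
  | zero => simp [wr, Real.Wallis.W]
  | succ m ih =>
    rw [wr_succ, Real.Wallis.W_succ]
    have h1 : (0:ℝ) < 2 * m + 2 := by positivity
    have h2 : (0:ℝ) < 2 * m + 1 := by positivity
    have h3 : (0:ℝ) < 2 * m + 3 := by positivity
    have : (2 * ((m:ℝ)+1) + 1) * (wr m * ((2*m+1)/(2*m+2)))^2 *
        (Real.Wallis.W m * ((2 * m + 2) / (2 * m + 1) * ((2 * m + 2) / (2 * m + 3))))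
        = (2 * (m:ℝ) + 1) * wr m ^ 2 * Real.Wallis.W m := by
      field_simp; ring
    push_cast
    rw [this, ih]

lemma wr_sq_lower (l : ℕ) : 2 / Real.pi ≤ (2 * (l:ℝ) + 1) * wr l ^ 2 := by
  have h := Real.Wallis.W_le l
  have hp := Real.Wallis.W_pos l
  have hw := wr_sq_wallis l
  have hpi : (0:ℝ) < Real.pi := Real.pi_pos
  rw [div_le_iff₀ hpi]
  have : (2 * (l:ℝ) + 1) * wr l ^ 2 = 1 / Real.Wallis.W l := by
    field_simp at hw ⊢; linarith [hw]
  rw [this, div_mul_eq_mul_div, le_div_iff₀ hp]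
  linarith


lemma oddsq_aux : ∀ K : ℕ, ∑ t ∈ Finset.Icc 1 (K+1), (1:ℝ)/(2*(t:ℝ)+1)^2 ≤ 17/72 - 1/(4*((K:ℝ)+1+1)) := by
  intro K
  induction K with
  | zero => norm_num [Finset.sum_Icc_succ_top]
  | succ m ih =>
    rw [Finset.sum_Icc_succ_top (by omega)]
    have h1 : (1:ℝ)/(2*((m:ℝ)+1+1)+1)^2 ≤ 1/(4*((m:ℝ)+1+1)) - 1/(4*((m:ℝ)+1+1+1)) := by
      rw [div_sub_div _ _ (by positivity) (by positivity), div_le_div_iff₀ (by positivity) (by positivity)]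
      nlinarith [sq_nonneg ((m:ℝ))]
    push_cast
    push_cast at ih
    linarith

lemma oddsq (K : ℕ) : ∑ t ∈ Finset.Icc 1 K, (1:ℝ)/(2*(t:ℝ)+1)^2 ≤ 17/72 := by
  cases K with
  | zero => norm_num
  | succ m =>
    have h2 : (0:ℝ) < 1/(4*((m:ℝ)+1+1)) := by positivity
    linarith [oddsq_aux m]

lemma tail_aux (k : ℕ) : ∀ K : ℕ, ∑ m ∈ Finset.Icc 1 K, (1:ℝ)/(2*(k:ℝ)+2*(m:ℝ)+1)^2 ≤ 1/(4*((k:ℝ)+1)) - 1/(4*((k:ℝ)+(K:ℝ)+1)) := by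
  intro K
  induction K with
  | zero => norm_num
  | succ m ih =>
    rw [Finset.sum_Icc_succ_top (by omega)]
    have h1 : (1:ℝ)/(2*(k:ℝ)+2*((m:ℝ)+1)+1)^2 ≤ 1/(4*((k:ℝ)+(m:ℝ)+1)) - 1/(4*((k:ℝ)+((m:ℝ)+1)+1)) := by
      rw [div_sub_div _ _ (by positivity) (by positivity), div_le_div_iff₀ (by positivity) (by positivity)]
      nlinarith [sq_nonneg ((k:ℝ)+(m:ℝ))]
    push_cast
    push_cast at ih
    linarith

lemma tail_le (k K : ℕ) : ∑ m ∈ Finset.Icc 1 K, (1:ℝ)/(2*(k:ℝ)+2*(m:ℝ)+1)^2 ≤ 1/(4*((k:ℝ)+1)) := by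
  have := tail_aux k K
  have h2 : (0:ℝ) ≤ 1/(4*((k:ℝ)+(K:ℝ)+1)) := by positivity
  linarith

lemma basel_aux : ∀ j : ℕ, ∑ m ∈ Finset.Icc 1 (10+j), (1:ℝ)/(m:ℝ)^2 ≤ 33/20 - 1/(10+(j:ℝ)) := by
  intro j
  induction j with
  | zero =>
    norm_num [show (10:ℕ) = 9+1 by rfl, Finset.sum_Icc_succ_top, show (9:ℕ) = 8+1 by rfl,
      show (8:ℕ) = 7+1 by rfl, show (7:ℕ) = 6+1 by rfl, show (6:ℕ) = 5+1 by rfl,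
      show (5:ℕ) = 4+1 by rfl, show (4:ℕ) = 3+1 by rfl, show (3:ℕ) = 2+1 by rfl,
      show (2:ℕ) = 1+1 by rfl, show (1:ℕ) = 0+1 by rfl]
  | succ j ih =>
    have h10 : 10 + (j+1) = (10 + j) + 1 := by omega
    rw [h10, Finset.sum_Icc_succ_top (by omega)]
    have h1 : (1:ℝ)/(10+(j:ℝ)+1)^2 ≤ 1/(10+(j:ℝ)) - 1/(10+((j:ℝ)+1)) := by
      rw [div_sub_div _ _ (by positivity) (by positivity), div_le_div_iff₀ (by positivity) (by positivity)]
      nlinarith [sq_nonneg ((j:ℝ))]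
    push_cast
    push_cast at ih
    linarith

lemma basel (k : ℕ) : ∑ m ∈ Finset.Icc 1 k, (1:ℝ)/(m:ℝ)^2 ≤ 33/20 := by
  rcases le_or_gt k 10 with h | h
  · have hsub : ∑ m ∈ Finset.Icc 1 k, (1:ℝ)/(m:ℝ)^2 ≤ ∑ m ∈ Finset.Icc 1 (10:ℕ), (1:ℝ)/(m:ℝ)^2 := by
      apply Finset.sum_le_sum_of_subset_of_nonneg (Finset.Icc_subset_Icc_right h)
      intro i _ _; positivity
    have h0 := basel_aux 0
    norm_num only [Nat.add_zero, Nat.cast_zero] at h0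
    push_cast at h0 hsub ⊢
    linarith
  · obtain ⟨j, rfl⟩ : ∃ j, k = 10 + j := ⟨k - 10, by omega⟩
    have h2 : (0:ℝ) < 1/(10+(j:ℝ)) := by positivity
    linarith [basel_aux j]


lemma sum_parity_even (f : ℕ → ℝ) (hf : ∀ j, Odd j → f j = 0) :
    ∀ k : ℕ, ∑ j ∈ Finset.Icc 1 (2*k), f j = ∑ m ∈ Finset.Icc 1 k, f (2*m) := by
  intro k
  induction k with
  | zero => simp
  | succ m ih =>
    have h1 : 2*(m+1) = (2*m+1)+1 := by ring
    rw [h1, Finset.sum_Icc_succ_top (by omega), Finset.sum_Icc_succ_top (by omega),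
      Finset.sum_Icc_succ_top (by omega), ih, hf (2*m+1) ⟨m, by ring⟩]
    have : 2*(m+1) = 2*m+1+1 := by ring
    rw [this]
    ring

lemma sum_parity_odd (f : ℕ → ℝ) (hf : ∀ j, Even j → f j = 0) :
    ∀ k : ℕ, ∑ j ∈ Finset.Icc 1 (2*k+1), f j = ∑ m ∈ Finset.range (k+1), f (2*m+1) := by
  intro k
  induction k with
  | zero => simp
  | succ m ih =>
    have h1 : 2*(m+1)+1 = ((2*m+1)+1)+1 := by ring
    rw [h1, Finset.sum_Icc_succ_top (by omega), Finset.sum_Icc_succ_top (by omega),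
      Finset.sum_range_succ, ih, hf (2*m+1+1) ⟨m+1, by ring⟩]
    have : 2*m+1+1+1 = 2*(m+1)+1 := by ring
    rw [this]
    ring

lemma ptilde_even (k m : ℕ) (h : m ≤ k) :
    ptildeSq (2*k) (2*m) = (2*(2*(k:ℝ))+1)/(4*Real.pi) * (wr (k-m) * wr (k+m)) := by
  have he : Even (2*k + 2*m) := ⟨k+m, by ring⟩
  rw [ptildeSq, if_pos he]
  have e3 : 2*k - 2*m - 1 = 2*(k-m) - 1 := by omega
  have e4 : 2*k + 2*m - 1 = 2*(k+m) - 1 := by omega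
  have e1 : 2*k - 2*m = 2*(k-m) := by omega
  have e2 : 2*k + 2*m = 2*(k+m) := by ring
  rw [e3, e4, e1, e2, wr_eq (k-m), wr_eq (k+m)]
  have p1 : (0:ℝ) < (Nat.doubleFactorial (2*(k-m)) : ℝ) := by exact_mod_cast Nat.doubleFactorial_pos _
  have p2 : (0:ℝ) < (Nat.doubleFactorial (2*(k+m)) : ℝ) := by exact_mod_cast Nat.doubleFactorial_pos _
  have hpi : Real.pi ≠ 0 := Real.pi_ne_zero
  push_cast
  field_simp

lemma ptilde_zero (k : ℕ) :
    ptildeSq (2*k) 0 = (2*(2*(k:ℝ))+1)/(4*Real.pi) * (wr k * wr k) := by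
  have := ptilde_even k 0 (Nat.zero_le k)
  simpa using this

lemma ptilde_odd (k m : ℕ) (h : m ≤ k) :
    ptildeSq (2*k+1) (2*m+1) = (2*(2*(k:ℝ)+1)+1)/(4*Real.pi) * (wr (k-m) * wr (k+m+1)) := by
  have he : Even ((2*k+1) + (2*m+1)) := ⟨k+m+1, by ring⟩
  rw [ptildeSq, if_pos he]
  have e3 : (2*k+1) - (2*m+1) - 1 = 2*(k-m) - 1 := by omega
  have e4 : (2*k+1) + (2*m+1) - 1 = 2*(k+m+1) - 1 := by omega
  have e1 : (2*k+1) - (2*m+1) = 2*(k-m) := by omega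
  have e2 : (2*k+1) + (2*m+1) = 2*(k+m+1) := by ring
  rw [e3, e4, e1, e2, wr_eq (k-m), wr_eq (k+m+1)]
  have p1 : (0:ℝ) < (Nat.doubleFactorial (2*(k-m)) : ℝ) := by exact_mod_cast Nat.doubleFactorial_pos _
  have p2 : (0:ℝ) < (Nat.doubleFactorial (2*(k+m+1)) : ℝ) := by exact_mod_cast Nat.doubleFactorial_pos _
  have hpi : Real.pi ≠ 0 := Real.pi_ne_zero
  push_cast
  field_simp

lemma ptilde_vanish_even (k j : ℕ) (h : Odd j) : ptildeSq (2*k) j = 0 := by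
  rw [ptildeSq, if_neg]
  rw [Nat.even_add]
  simp [Nat.odd_iff.mp h, Nat.even_iff]

lemma ptilde_vanish_odd (k j : ℕ) (h : Even j) : ptildeSq (2*k+1) j = 0 := by
  rw [ptildeSq, if_neg]
  rw [Nat.even_add]
  simp [Nat.even_iff.mp h, Nat.even_iff, Nat.odd_iff]

lemma sigmaSq_even (k : ℕ) :
    sigmaSq (2*k) = 8*Real.pi^4/3 * wr k^2 +
      8*Real.pi^2 * ∑ m ∈ Finset.Icc 1 k, wr (k-m) * wr (k+m) / (4*(m:ℝ)^2) := by
  rw [sigmaSq]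
  have hs : ∑ j ∈ Finset.Icc 1 (2*k), ptildeSq (2*k) j / (j:ℝ)^2
      = ∑ m ∈ Finset.Icc 1 k, ptildeSq (2*k) (2*m) / ((2*m:ℕ):ℝ)^2 :=
    sum_parity_even (fun j => ptildeSq (2*k) j / (j:ℝ)^2)
      (fun j hj => by rw [ptilde_vanish_even k j hj, zero_div]) k
  rw [hs]
  have hs2 : ∑ m ∈ Finset.Icc 1 k, ptildeSq (2*k) (2*m) / ((2*m:ℕ):ℝ)^2
      = (2*(2*(k:ℝ))+1)/(4*Real.pi) * ∑ m ∈ Finset.Icc 1 k, wr (k-m) * wr (k+m) / (4*(m:ℝ)^2) := by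
    rw [Finset.mul_sum]
    apply Finset.sum_congr rfl
    intro m hm
    obtain ⟨h1, h2⟩ := Finset.mem_Icc.mp hm
    rw [ptilde_even k m h2]
    push_cast
    rw [mul_div_assoc]
    congr 1
    ring
  rw [hs2, ptilde_zero k]
  have hpi := Real.pi_ne_zero
  have h2k : (2*(2*(k:ℝ))+1) ≠ 0 := by positivity
  push_cast
  field_simp
  ring

lemma sigmaSq_odd (k : ℕ) :
    sigmaSq (2*k+1) =
      8*Real.pi^2 * ∑ m ∈ Finset.range (k+1), wr (k-m) * wr (k+m+1) / ((2*(m:ℝ)+1)^2) := by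
  rw [sigmaSq]
  have h0 : ptildeSq (2*k+1) 0 = 0 := ptilde_vanish_odd k 0 (Even.zero)
  have hs : ∑ j ∈ Finset.Icc 1 (2*k+1), ptildeSq (2*k+1) j / (j:ℝ)^2
      = ∑ m ∈ Finset.range (k+1), ptildeSq (2*k+1) (2*m+1) / ((2*m+1:ℕ):ℝ)^2 :=
    sum_parity_odd (fun j => ptildeSq (2*k+1) j / (j:ℝ)^2)
      (fun j hj => by rw [ptilde_vanish_odd k j hj, zero_div]) k
  rw [hs, h0]
  have hs2 : ∑ m ∈ Finset.range (k+1), ptildeSq (2*k+1) (2*m+1) / ((2*m+1:ℕ):ℝ)^2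
      = (2*(2*(k:ℝ)+1)+1)/(4*Real.pi) * ∑ m ∈ Finset.range (k+1), wr (k-m) * wr (k+m+1) / ((2*(m:ℝ)+1)^2) := by
    rw [Finset.mul_sum]
    apply Finset.sum_congr rfl
    intro m hm
    have h2 : m ≤ k := by
      have := Finset.mem_range.mp hm; omega
    rw [ptilde_odd k m h2]
    have hpi := Real.pi_ne_zero
    push_cast
    field_simp
    all_goals first
      | exact Or.inl trivial
      | ring
  rw [hs2]
  have hpi := Real.pi_ne_zero
  have h2k : (2*(2*(k:ℝ)+1)+1) ≠ 0 := by positivity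
  push_cast
  field_simp
  ring

lemma wr_sq_le (l : ℕ) : wr l ^ 2 ≤ 1/(2*(l:ℝ)+1) := by
  have h := wr_sq_upper l
  have hp : (0:ℝ) < 2*(l:ℝ)+1 := by positivity
  rw [le_div_iff₀ hp]
  linarith

lemma wr_mul_le (a b : ℕ) : wr a * wr b ≤ (1/2)*(1/(2*(a:ℝ)+1) + 1/(2*(b:ℝ)+1)) := by
  have h1 := wr_sq_le a
  have h2 := wr_sq_le b
  nlinarith [sq_nonneg (wr a - wr b), (wr_pos a).le, (wr_pos b).le]

/-- termwise bound for the even-case sum -/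
lemma even_term_bound (k : ℕ) :
    ∑ m ∈ Finset.Icc 1 k, wr (k-m) * wr (k+m) / (4*(m:ℝ)^2)
      ≤ (1/(2*(k:ℝ)+1)) * ∑ m ∈ Finset.Icc 1 k,
        ((1:ℝ)/(4*(m:ℝ)^2) + 1/((2*(k:ℝ)-2*(m:ℝ)+1)*(2*(k:ℝ)+2*(m:ℝ)+1))) := by
  rw [Finset.mul_sum]
  apply Finset.sum_le_sum
  intro m hm
  obtain ⟨h1, h2⟩ := Finset.mem_Icc.mp hm
  have hm1 : (1:ℝ) ≤ (m:ℝ) := by exact_mod_cast h1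
  have hmk : (m:ℝ) ≤ (k:ℝ) := by exact_mod_cast h2
  have ha : (0:ℝ) < 2*(k:ℝ)-2*(m:ℝ)+1 := by linarith
  have hb : (0:ℝ) < 2*(k:ℝ)+2*(m:ℝ)+1 := by linarith
  have hcast : ((k-m : ℕ):ℝ) = (k:ℝ) - (m:ℝ) := by
    rw [Nat.cast_sub h2]
  have hw : wr (k-m) * wr (k+m) ≤ (1/2)*(1/(2*(k:ℝ)-2*(m:ℝ)+1) + 1/(2*(k:ℝ)+2*(m:ℝ)+1)) := by
    have := wr_mul_le (k-m) (k+m)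
    rw [hcast] at this
    push_cast at this
    convert this using 3 <;> ring
  have hd : (0:ℝ) < 4*(m:ℝ)^2 := by positivity
  have step : wr (k-m) * wr (k+m) / (4*(m:ℝ)^2)
      ≤ ((1/2)*(1/(2*(k:ℝ)-2*(m:ℝ)+1) + 1/(2*(k:ℝ)+2*(m:ℝ)+1))) / (4*(m:ℝ)^2) := by
    apply div_le_div_of_nonneg_right hw hd.le
  refine step.trans (le_of_eq ?_)
  have hm0 : (m:ℝ) ≠ 0 := by linarith
  have ha' := ha.ne'
  have hb' := hb.ne'
  set a := 2*(k:ℝ)-2*(m:ℝ)+1 with hadef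
  set b := 2*(k:ℝ)+2*(m:ℝ)+1 with hbdef
  field_simp
  rw [hadef, hbdef]
  ring

lemma reindex_X (K : ℕ) :
    ∑ m ∈ Finset.Icc 1 K, ((1:ℝ)/(2*((K:ℝ)+1)-2*(m:ℝ)+1))^2
      = ∑ t ∈ Finset.Icc 1 K, ((1:ℝ)/(2*(t:ℝ)+1))^2 := by
  apply Finset.sum_nbij' (fun m => K+1-m) (fun t => K+1-t)
  · intro a ha; obtain ⟨h1,h2⟩ := Finset.mem_Icc.mp ha; exact Finset.mem_Icc.mpr ⟨by omega, by omega⟩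
  · intro a ha; obtain ⟨h1,h2⟩ := Finset.mem_Icc.mp ha; exact Finset.mem_Icc.mpr ⟨by omega, by omega⟩
  · intro a ha; obtain ⟨h1,h2⟩ := Finset.mem_Icc.mp ha; omega
  · intro a ha; obtain ⟨h1,h2⟩ := Finset.mem_Icc.mp ha; omega
  · intro a ha
    obtain ⟨h1,h2⟩ := Finset.mem_Icc.mp ha
    have : ((K+1-a : ℕ):ℝ) = (K:ℝ)+1-(a:ℝ) := by
      rw [Nat.cast_sub (by omega)]; push_cast; ring
    rw [this]
    congr 1
    ring

lemma S2_large (k : ℕ) (hk : 13 ≤ k) :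
    ∑ m ∈ Finset.Icc 1 k, (1:ℝ)/((2*(k:ℝ)-2*(m:ℝ)+1)*(2*(k:ℝ)+2*(m:ℝ)+1)) ≤ 7/80 := by
  obtain ⟨K, rfl⟩ : ∃ K, k = K + 1 := ⟨k-1, by omega⟩
  rw [Finset.sum_Icc_succ_top (by omega)]
  have hK : 12 ≤ K := by omega
  -- top term
  have htop : (1:ℝ)/((2*((K:ℝ)+1)-2*((K:ℝ)+1)+1)*(2*((K:ℝ)+1)+2*((K:ℝ)+1)+1)) ≤ 1/53 := by
    have h1 : (2*((K:ℝ)+1)-2*((K:ℝ)+1)+1)*(2*((K:ℝ)+1)+2*((K:ℝ)+1)+1) = 4*(K:ℝ)+5 := by ring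
    rw [h1]
    have hKr : (12:ℝ) ≤ (K:ℝ) := by exact_mod_cast hK
    rw [div_le_div_iff₀ (by linarith) (by norm_num)]
    linarith
  -- CS part
  set k := K + 1 with hkdef
  have hCS : ∑ m ∈ Finset.Icc 1 K, (1:ℝ)/((2*(k:ℝ)-2*(m:ℝ)+1)*(2*(k:ℝ)+2*(m:ℝ)+1)) ≤ 33/500 := by
    have hterm : ∀ m ∈ Finset.Icc 1 K, (1:ℝ)/((2*(k:ℝ)-2*(m:ℝ)+1)*(2*(k:ℝ)+2*(m:ℝ)+1))
        = (1/(2*(k:ℝ)-2*(m:ℝ)+1)) * (1/(2*(k:ℝ)+2*(m:ℝ)+1)) := by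
      intro m hm
      rw [div_mul_div_comm, one_mul]
    rw [Finset.sum_congr rfl hterm]
    have hC2 := Finset.sum_mul_sq_le_sq_mul_sq (Finset.Icc 1 K)
      (fun m => (1:ℝ)/(2*(k:ℝ)-2*(m:ℝ)+1)) (fun m => (1:ℝ)/(2*(k:ℝ)+2*(m:ℝ)+1))
    have hX : ∑ m ∈ Finset.Icc 1 K, ((1:ℝ)/(2*(k:ℝ)-2*(m:ℝ)+1))^2 ≤ 17/72 := by
      have e : ∑ m ∈ Finset.Icc 1 K, ((1:ℝ)/(2*(k:ℝ)-2*(m:ℝ)+1))^2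
          = ∑ m ∈ Finset.Icc 1 K, ((1:ℝ)/(2*((K:ℝ)+1)-2*(m:ℝ)+1))^2 := by
        apply Finset.sum_congr rfl
        intro m _
        rw [hkdef]; push_cast; ring_nf
      rw [e, reindex_X K]
      have := oddsq K
      calc ∑ t ∈ Finset.Icc 1 K, ((1:ℝ)/(2*(t:ℝ)+1))^2
          = ∑ t ∈ Finset.Icc 1 K, (1:ℝ)/(2*(t:ℝ)+1)^2 := by
            apply Finset.sum_congr rfl; intro t _; rw [one_div, one_div, inv_pow]
        _ ≤ 17/72 := this
    have hY : ∑ m ∈ Finset.Icc 1 K, ((1:ℝ)/(2*(k:ℝ)+2*(m:ℝ)+1))^2 ≤ 1/56 := by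
      have e : ∑ m ∈ Finset.Icc 1 K, ((1:ℝ)/(2*(k:ℝ)+2*(m:ℝ)+1))^2
          = ∑ m ∈ Finset.Icc 1 K, (1:ℝ)/(2*(k:ℝ)+2*(m:ℝ)+1)^2 := by
        apply Finset.sum_congr rfl; intro t _; rw [one_div, one_div, inv_pow]
      rw [e]
      refine (tail_le k K).trans ?_
      have hKr : (13:ℝ) ≤ (k:ℝ) := by exact_mod_cast (by omega : 13 ≤ k)
      rw [div_le_div_iff₀ (by linarith) (by norm_num)]
      linarith
    have hCnn : (0:ℝ) ≤ ∑ m ∈ Finset.Icc 1 K, (1/(2*(k:ℝ)-2*(m:ℝ)+1)) * (1/(2*(k:ℝ)+2*(m:ℝ)+1)) := by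
      apply Finset.sum_nonneg
      intro m hm
      obtain ⟨h1,h2⟩ := Finset.mem_Icc.mp hm
      have hm1 : (m:ℝ) ≤ (k:ℝ) := by
        have : m ≤ k := by omega
        exact_mod_cast this
      have : (0:ℝ) < 2*(k:ℝ)-2*(m:ℝ)+1 := by linarith
      positivity
    have hXnn : (0:ℝ) ≤ ∑ m ∈ Finset.Icc 1 K, ((1:ℝ)/(2*(k:ℝ)-2*(m:ℝ)+1))^2 := by
      apply Finset.sum_nonneg; intro m _; positivity
    nlinarith [hC2, hX, hY, hCnn, hXnn]
  have hcast : ((k:ℕ):ℝ) = (K:ℝ)+1 := by rw [hkdef]; push_cast; ring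
  calc ∑ m ∈ Finset.Icc 1 K, (1:ℝ)/((2*(k:ℝ)-2*(m:ℝ)+1)*(2*(k:ℝ)+2*(m:ℝ)+1))
        + (1:ℝ)/((2*(k:ℝ)-2*((k:ℕ):ℝ)+1)*(2*(k:ℝ)+2*((k:ℕ):ℝ)+1))
      ≤ 33/500 + 1/53 := by
        apply add_le_add hCS
        rw [hcast]
        exact htop
    _ ≤ 7/80 := by norm_num

lemma half_bound (k : ℕ) :
    ∑ m ∈ Finset.Icc 1 k,
        ((1:ℝ)/(4*(m:ℝ)^2) + 1/((2*(k:ℝ)-2*(m:ℝ)+1)*(2*(k:ℝ)+2*(m:ℝ)+1))) ≤ 1/2 := by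
  rcases le_or_gt k 12 with hk | hk
  · interval_cases k <;>
      norm_num [Finset.sum_Icc_succ_top, show (1:ℕ) ≤ 2 by norm_num]
  · rw [Finset.sum_add_distrib]
    have h1 : ∑ m ∈ Finset.Icc 1 k, (1:ℝ)/(4*(m:ℝ)^2) ≤ 33/80 := by
      have e : ∑ m ∈ Finset.Icc 1 k, (1:ℝ)/(4*(m:ℝ)^2)
          = (1/4) * ∑ m ∈ Finset.Icc 1 k, (1:ℝ)/(m:ℝ)^2 := by
        rw [Finset.mul_sum]
        apply Finset.sum_congr rfl
        intro m _
        ring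
      rw [e]
      linarith [basel k]
    have h2 := S2_large k (by omega)
    linarith

lemma key_even (k : ℕ) :
    ∑ m ∈ Finset.Icc 1 k, wr (k-m) * wr (k+m) / (4*(m:ℝ)^2) ≤ 1/(2*(2*(k:ℝ)+1)) := by
  refine (even_term_bound k).trans ?_
  have h := half_bound k
  have hpos : (0:ℝ) < 2*(k:ℝ)+1 := by positivity
  calc (1/(2*(k:ℝ)+1)) * ∑ m ∈ Finset.Icc 1 k,
        ((1:ℝ)/(4*(m:ℝ)^2) + 1/((2*(k:ℝ)-2*(m:ℝ)+1)*(2*(k:ℝ)+2*(m:ℝ)+1)))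
      ≤ (1/(2*(k:ℝ)+1)) * (1/2) := by
        apply mul_le_mul_of_nonneg_left h (by positivity)
    _ = 1/(2*(2*(k:ℝ)+1)) := by
        field_simp

lemma odd_term_bound (k : ℕ) :
    ∑ m ∈ Finset.range (k+1), wr (k-m) * wr (k+m+1) / ((2*(m:ℝ)+1)^2)
      ≤ (1/(2*(k:ℝ)+2)) * ∑ m ∈ Finset.range (k+1),
        ((1:ℝ)/((2*(m:ℝ)+1)^2) + 1/((2*(k:ℝ)-2*(m:ℝ)+1)*(2*(k:ℝ)+2*(m:ℝ)+3))) := by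
  rw [Finset.mul_sum]
  apply Finset.sum_le_sum
  intro m hm
  have h2 : m ≤ k := by have := Finset.mem_range.mp hm; omega
  have hmk : (m:ℝ) ≤ (k:ℝ) := by exact_mod_cast h2
  have hm0 : (0:ℝ) ≤ (m:ℝ) := by positivity
  have ha : (0:ℝ) < 2*(k:ℝ)-2*(m:ℝ)+1 := by linarith
  have hb : (0:ℝ) < 2*(k:ℝ)+2*(m:ℝ)+3 := by linarith
  have hcast : ((k-m : ℕ):ℝ) = (k:ℝ) - (m:ℝ) := by rw [Nat.cast_sub h2]
  have hw : wr (k-m) * wr (k+m+1) ≤ (1/2)*(1/(2*(k:ℝ)-2*(m:ℝ)+1) + 1/(2*(k:ℝ)+2*(m:ℝ)+3)) := by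
    have := wr_mul_le (k-m) (k+m+1)
    rw [hcast] at this
    push_cast at this
    convert this using 3 <;> ring
  have hd : (0:ℝ) < (2*(m:ℝ)+1)^2 := by positivity
  have step : wr (k-m) * wr (k+m+1) / ((2*(m:ℝ)+1)^2)
      ≤ ((1/2)*(1/(2*(k:ℝ)-2*(m:ℝ)+1) + 1/(2*(k:ℝ)+2*(m:ℝ)+3))) / ((2*(m:ℝ)+1)^2) :=
    div_le_div_of_nonneg_right hw hd.le
  refine step.trans (le_of_eq ?_)
  have ha' := ha.ne'
  have hb' := hb.ne'
  set a := 2*(k:ℝ)-2*(m:ℝ)+1 with hadef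
  set b := 2*(k:ℝ)+2*(m:ℝ)+3 with hbdef
  field_simp
  rw [hadef, hbdef]
  ring

lemma oddsq' (k : ℕ) :
    ∑ m ∈ Finset.range (k+1), (1:ℝ)/((2*(m:ℝ)+1)^2) ≤ 89/72 := by
  rw [Finset.sum_range_succ']
  have e : ∑ m ∈ Finset.range k, (1:ℝ)/((2*((m:ℝ)+1)+1)^2)
      = ∑ t ∈ Finset.Icc 1 k, (1:ℝ)/(2*(t:ℝ)+1)^2 := by
    apply Finset.sum_nbij' (fun m => m+1) (fun t => t-1)
    · intro a ha; have := Finset.mem_range.mp ha; exact Finset.mem_Icc.mpr ⟨by omega, by omega⟩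
    · intro a ha; obtain ⟨h1,h2⟩ := Finset.mem_Icc.mp ha; exact Finset.mem_range.mpr (by omega)
    · intro a _; omega
    · intro a ha; obtain ⟨h1,h2⟩ := Finset.mem_Icc.mp ha; omega
    · intro a _; push_cast; ring_nf
  have e2 : ∑ m ∈ Finset.range k, (1:ℝ)/((2*((↑(m+1)):ℝ)+1)^2)
      = ∑ m ∈ Finset.range k, (1:ℝ)/((2*((m:ℝ)+1)+1)^2) := by
    apply Finset.sum_congr rfl; intro m _; push_cast; ring_nf
  rw [e2, e]
  have h17 := oddsq k
  have h0 : (1:ℝ)/((2*((0:ℕ):ℝ)+1)^2) = 1 := by norm_num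
  rw [h0]
  have e3 : ∑ t ∈ Finset.Icc 1 k, (1:ℝ)/(2*(t:ℝ)+1)^2
      = ∑ t ∈ Finset.Icc 1 k, (1:ℝ)/((2*(t:ℝ)+1)^2) := rfl
  linarith

lemma S2_odd (k : ℕ) (hk : 1 ≤ k) :
    ∑ m ∈ Finset.range (k+1), (1:ℝ)/((2*(k:ℝ)-2*(m:ℝ)+1)*(2*(k:ℝ)+2*(m:ℝ)+3)) ≤ 1/7 + 43/250 := by
  rw [Finset.sum_range_succ]
  have htop : (1:ℝ)/((2*(k:ℝ)-2*(k:ℝ)+1)*(2*(k:ℝ)+2*(k:ℝ)+3)) ≤ 1/7 := by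
    have h1 : (2*(k:ℝ)-2*(k:ℝ)+1)*(2*(k:ℝ)+2*(k:ℝ)+3) = 4*(k:ℝ)+3 := by ring
    rw [h1]
    have hKr : (1:ℝ) ≤ (k:ℝ) := by exact_mod_cast hk
    rw [div_le_div_iff₀ (by linarith) (by norm_num)]
    linarith
  have hCS : ∑ m ∈ Finset.range k, (1:ℝ)/((2*(k:ℝ)-2*(m:ℝ)+1)*(2*(k:ℝ)+2*(m:ℝ)+3)) ≤ 43/250 := by
    have hterm : ∀ m ∈ Finset.range k, (1:ℝ)/((2*(k:ℝ)-2*(m:ℝ)+1)*(2*(k:ℝ)+2*(m:ℝ)+3))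
        = (1/(2*(k:ℝ)-2*(m:ℝ)+1)) * (1/(2*(k:ℝ)+2*(m:ℝ)+3)) := by
      intro m hm; rw [div_mul_div_comm, one_mul]
    rw [Finset.sum_congr rfl hterm]
    have hC2 := Finset.sum_mul_sq_le_sq_mul_sq (Finset.range k)
      (fun m => (1:ℝ)/(2*(k:ℝ)-2*(m:ℝ)+1)) (fun m => (1:ℝ)/(2*(k:ℝ)+2*(m:ℝ)+3))
    have hX : ∑ m ∈ Finset.range k, ((1:ℝ)/(2*(k:ℝ)-2*(m:ℝ)+1))^2 ≤ 17/72 := by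
      have e : ∑ m ∈ Finset.range k, ((1:ℝ)/(2*(k:ℝ)-2*(m:ℝ)+1))^2
          = ∑ t ∈ Finset.Icc 1 k, (1:ℝ)/(2*(t:ℝ)+1)^2 := by
        apply Finset.sum_nbij' (fun m => k-m) (fun t => k-t)
        · intro a ha; have := Finset.mem_range.mp ha; exact Finset.mem_Icc.mpr ⟨by omega, by omega⟩
        · intro a ha; obtain ⟨h1,h2⟩ := Finset.mem_Icc.mp ha; exact Finset.mem_range.mpr (by omega)
        · intro a ha; have := Finset.mem_range.mp ha; omega
        · intro a ha; obtain ⟨h1,h2⟩ := Finset.mem_Icc.mp ha; omega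
        · intro a ha
          have ham := Finset.mem_range.mp ha
          have : ((k-a : ℕ):ℝ) = (k:ℝ)-(a:ℝ) := by rw [Nat.cast_sub (by omega)]
          rw [this, one_div, one_div, inv_pow]
          congr 2
          ring
      rw [e]
      exact oddsq k
    have hY : ∑ m ∈ Finset.range k, ((1:ℝ)/(2*(k:ℝ)+2*(m:ℝ)+3))^2 ≤ 1/8 := by
      have e : ∑ m ∈ Finset.range k, ((1:ℝ)/(2*(k:ℝ)+2*(m:ℝ)+3))^2
          = ∑ m ∈ Finset.Icc 1 k, (1:ℝ)/(2*(k:ℝ)+2*(m:ℝ)+1)^2 := by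
        apply Finset.sum_nbij' (fun m => m+1) (fun t => t-1)
        · intro a ha; have := Finset.mem_range.mp ha; exact Finset.mem_Icc.mpr ⟨by omega, by omega⟩
        · intro a ha; obtain ⟨h1,h2⟩ := Finset.mem_Icc.mp ha; exact Finset.mem_range.mpr (by omega)
        · intro a _; omega
        · intro a ha; obtain ⟨h1,h2⟩ := Finset.mem_Icc.mp ha; omega
        · intro a _
          rw [one_div, one_div, inv_pow]
          push_cast
          congr 2
          ring
      rw [e]
      refine (tail_le k k).trans ?_
      have hKr : (1:ℝ) ≤ (k:ℝ) := by exact_mod_cast hk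
      rw [div_le_div_iff₀ (by linarith) (by norm_num)]
      linarith
    have hCnn : (0:ℝ) ≤ ∑ m ∈ Finset.range k, (1/(2*(k:ℝ)-2*(m:ℝ)+1)) * (1/(2*(k:ℝ)+2*(m:ℝ)+3)) := by
      apply Finset.sum_nonneg
      intro m hm
      have := Finset.mem_range.mp hm
      have hm1 : (m:ℝ) ≤ (k:ℝ) := by exact_mod_cast (by omega : m ≤ k)
      have h1 : (0:ℝ) < 2*(k:ℝ)-2*(m:ℝ)+1 := by linarith
      positivity
    have hXnn : (0:ℝ) ≤ ∑ m ∈ Finset.range k, ((1:ℝ)/(2*(k:ℝ)-2*(m:ℝ)+1))^2 := by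
      apply Finset.sum_nonneg; intro m _; positivity
    have hYnn : (0:ℝ) ≤ ∑ m ∈ Finset.range k, ((1:ℝ)/(2*(k:ℝ)+2*(m:ℝ)+3))^2 := by
      apply Finset.sum_nonneg; intro m _; positivity
    have hXY : (∑ m ∈ Finset.range k, ((1:ℝ)/(2*(k:ℝ)-2*(m:ℝ)+1))^2)
        * (∑ m ∈ Finset.range k, ((1:ℝ)/(2*(k:ℝ)+2*(m:ℝ)+3))^2) ≤ 17/576 := by
      calc _ ≤ (17/72 : ℝ) * (1/8) := mul_le_mul hX hY hYnn (by norm_num)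
        _ = 17/576 := by norm_num
    nlinarith [hC2, hXY, hCnn]
  have hrest : (0:ℝ) ≤ 1/7 - (1:ℝ)/((2*(k:ℝ)-2*(k:ℝ)+1)*(2*(k:ℝ)+2*(k:ℝ)+3)) := by linarith
  linarith

lemma key_odd (k : ℕ) (hk : 1 ≤ k) :
    ∑ m ∈ Finset.range (k+1), wr (k-m) * wr (k+m+1) / ((2*(m:ℝ)+1)^2)
      ≤ (1/(2*(k:ℝ)+2)) * (1/2 + 2/Real.sqrt 3) := by
  refine (odd_term_bound k).trans ?_
  have hsq : Real.sqrt 3 ≤ 7/4 := by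
    rw [show (7:ℝ)/4 = Real.sqrt ((7/4)^2) by rw [Real.sqrt_sq (by norm_num)]]
    apply Real.sqrt_le_sqrt; norm_num
  have h3 : (0:ℝ) < Real.sqrt 3 := Real.sqrt_pos.mpr (by norm_num)
  have hs : (8:ℝ)/7 ≤ 2 / Real.sqrt 3 := by
    rw [le_div_iff₀ h3]; linarith
  have hsum : ∑ m ∈ Finset.range (k+1),
      ((1:ℝ)/((2*(m:ℝ)+1)^2) + 1/((2*(k:ℝ)-2*(m:ℝ)+1)*(2*(k:ℝ)+2*(m:ℝ)+3))) ≤ 1/2 + 2/Real.sqrt 3 := by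
    rw [Finset.sum_add_distrib]
    have h1 := oddsq' k
    have h2 := S2_odd k hk
    have : (89:ℝ)/72 + (1/7 + 43/250) ≤ 1/2 + 8/7 := by norm_num
    linarith
  apply mul_le_mul_of_nonneg_left hsum (by positivity)

theorem sigmaSq_bounds (n : ℕ) :
    (Even n →
      16 / 3 * Real.pi ^ 3 / ((n : ℝ) + 1) ≤ sigmaSq n ∧
        sigmaSq n ≤ (8 * Real.pi ^ 4 / 3 + 4 * Real.pi ^ 2) / ((n : ℝ) + 1)) ∧
    (Odd n →
      16 * Real.pi / ((n : ℝ) + 1) ≤ sigmaSq n ∧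
        sigmaSq n ≤ 4 * Real.pi ^ 2 * (4 / Real.sqrt 3 + 1) / ((n : ℝ) + 1)) := by
  have hpi : (0:ℝ) < Real.pi := Real.pi_pos
  constructor
  · intro hn
    obtain ⟨k, rfl⟩ := hn
    have h2 : k + k = 2*k := by ring
    rw [h2, sigmaSq_even k]
    have hcast : ((2*k : ℕ):ℝ) = 2*(k:ℝ) := by push_cast; ring
    rw [hcast]
    have hK : (0:ℝ) < 2*(k:ℝ)+1 := by positivity
    have hSnn : (0:ℝ) ≤ ∑ m ∈ Finset.Icc 1 k, wr (k-m) * wr (k+m) / (4*(m:ℝ)^2) := by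
      apply Finset.sum_nonneg
      intro m hm
      have := wr_pos (k-m)
      have := wr_pos (k+m)
      positivity
    constructor
    · have hlow : 16/3*Real.pi^3/(2*(k:ℝ)+1) ≤ 8*Real.pi^4/3 * wr k^2 := by
        have h := wr_sq_lower k
        rw [div_le_iff₀ hK]
        calc 16/3*Real.pi^3 = (8*Real.pi^4/3) * (2/Real.pi) := by
              field_simp; ring
          _ ≤ (8*Real.pi^4/3) * ((2*(k:ℝ)+1) * wr k^2) := by
              apply mul_le_mul_of_nonneg_left h (by positivity)
          _ = 8*Real.pi^4/3 * wr k^2 * (2*(k:ℝ)+1) := by ring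
      nlinarith [hSnn]
    · have h1 : 8*Real.pi^4/3 * wr k^2 ≤ 8*Real.pi^4/3 * (1/(2*(k:ℝ)+1)) :=
        mul_le_mul_of_nonneg_left (wr_sq_le k) (by positivity)
      have h2' : 8*Real.pi^2 * ∑ m ∈ Finset.Icc 1 k, wr (k-m) * wr (k+m) / (4*(m:ℝ)^2)
          ≤ 8*Real.pi^2 * (1/(2*(2*(k:ℝ)+1))) :=
        mul_le_mul_of_nonneg_left (key_even k) (by positivity)
      have heq : 8*Real.pi^4/3 * (1/(2*(k:ℝ)+1)) + 8*Real.pi^2 * (1/(2*(2*(k:ℝ)+1)))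
          = (8 * Real.pi ^ 4 / 3 + 4 * Real.pi ^ 2) / (2*(k:ℝ) + 1) := by
        field_simp
        ring
      linarith
  · intro hn
    obtain ⟨k, rfl⟩ := hn
    rw [sigmaSq_odd k]
    have hcast : ((2*k+1 : ℕ):ℝ) = 2*(k:ℝ)+1 := by push_cast; ring
    rw [hcast]
    have hK : (0:ℝ) < 2*(k:ℝ)+2 := by positivity
    have hsq3 : Real.sqrt 3 ≤ 7/4 := by
      rw [show (7:ℝ)/4 = Real.sqrt ((7/4)^2) by rw [Real.sqrt_sq (by norm_num)]]
      apply Real.sqrt_le_sqrt; norm_num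
    have h3 : (0:ℝ) < Real.sqrt 3 := Real.sqrt_pos.mpr (by norm_num)
    constructor
    · -- lower bound
      have hf0 : wr k * wr (k+1) / ((2*((0:ℕ):ℝ)+1)^2) = wr k^2 * ((2*(k:ℝ)+1)/(2*(k:ℝ)+2)) := by
        rw [wr_succ k]
        push_cast
        field_simp
        ring
      have hsum_ge : wr k^2 * ((2*(k:ℝ)+1)/(2*(k:ℝ)+2))
          ≤ ∑ m ∈ Finset.range (k+1), wr (k-m) * wr (k+m+1) / ((2*(m:ℝ)+1)^2) := by
        rw [← hf0]
        have h0mem : 0 ∈ Finset.range (k+1) := Finset.mem_range.mpr (by omega)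
        have := Finset.single_le_sum (f := fun m => wr (k-m) * wr (k+m+1) / ((2*(m:ℝ)+1)^2))
          (fun m _ => by
            have := wr_pos (k-m); have := wr_pos (k+m+1); positivity) h0mem
        simpa using this
      have hlow : 16*Real.pi/(2*(k:ℝ)+1+1) ≤ 8*Real.pi^2 * (wr k^2 * ((2*(k:ℝ)+1)/(2*(k:ℝ)+2))) := by
        have h := wr_sq_lower k
        have e1 : 2*(k:ℝ)+1+1 = 2*(k:ℝ)+2 := by ring
        rw [e1, div_le_iff₀ hK]
        have e2 : 16*Real.pi = (8*Real.pi^2) * (2/Real.pi) := by field_simp; ring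
        rw [e2]
        calc (8*Real.pi^2) * (2/Real.pi) ≤ (8*Real.pi^2) * ((2*(k:ℝ)+1) * wr k^2) := by
              apply mul_le_mul_of_nonneg_left h (by positivity)
          _ = 8*Real.pi^2 * (wr k^2 * ((2*(k:ℝ)+1)/(2*(k:ℝ)+2))) * (2*(k:ℝ)+2) := by
              field_simp
      refine hlow.trans ?_
      apply mul_le_mul_of_nonneg_left hsum_ge (by positivity)
    · -- upper bound
      rcases Nat.eq_zero_or_pos k with hk0 | hkpos
      · subst hk0
        have hsum : ∑ m ∈ Finset.range (0+1), wr (0-m) * wr (0+m+1) / ((2*(m:ℝ)+1)^2) = 1/2 := by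
          rw [Finset.sum_range_one]
          norm_num [wr_succ 0, show wr 0 = 1 by simp [wr]]
        rw [hsum]
        have e0 : (2*((0:ℕ):ℝ)+1+1) = 2 := by norm_num
        rw [e0]
        rw [le_div_iff₀ (by norm_num : (0:ℝ) < 2)]
        have h4 : (1:ℝ) ≤ 4/Real.sqrt 3 := by
          rw [le_div_iff₀ h3]; linarith
        nlinarith [mul_nonneg (sq_nonneg Real.pi) (by linarith : (0:ℝ) ≤ 4/Real.sqrt 3 - 1)]
      · have hkey := key_odd k hkpos
        have step : 8*Real.pi^2 * ∑ m ∈ Finset.range (k+1), wr (k-m) * wr (k+m+1) / ((2*(m:ℝ)+1)^2)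
            ≤ 8*Real.pi^2 * ((1/(2*(k:ℝ)+2)) * (1/2 + 2/Real.sqrt 3)) :=
          mul_le_mul_of_nonneg_left hkey (by positivity)
        refine step.trans (le_of_eq ?_)
        have e1 : 2*(k:ℝ)+1+1 = 2*(k:ℝ)+2 := by ring
        rw [e1]
        have hs3 : Real.sqrt 3 ≠ 0 := h3.ne'
        field_simp
        ring
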